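/- Let (V,Ω) be a symplectic vector space, (W₁,π₁), (W₂,π₂) Poisson vector spaces, and J₁: V → W₁, J₂: V → W₂ linear Poisson maps forming a linear dual pair, i.e., (ker J₁)^Ω = ker J₂. Let B₁, B₂ be skew-symmetric bilinear forms on W₁, W₂ respectively, and set Ω̂ = Ω + J₁*B₁ + J₂*B₂. Then: (i) J₁ and J₂ are forward Dirac maps from (V, graph Ω̂) to (W₁, τ_{B₁}(graph π₁)) and (W₂, τ_{B₂}(graph π₂)) respectively; (ii) Ω̂ is nondegenerate if and only if both τ_{B₁}(graph π₁) and τ_{B₂}(graph π₂) are graphs of bivectors; (iii) (ker J₁)^Ω̂ = ker J₂ + ker Ω̂. -/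

import Mathlib

open Module LinearMap

variable {V W U : Type*} [AddCommGroup V] [Module ℝ V] [FiniteDimensional ℝ V]
  [AddCommGroup W] [Module ℝ W] [FiniteDimensional ℝ W]
  [AddCommGroup U] [Module ℝ U] [FiniteDimensional ℝ U]

/-- The canonical symmetric pairing on `V ⊕ V*`. -/
noncomputable def diracPairing (p q : V × Module.Dual ℝ V) : ℝ := (p.2 q.1 + q.2 p.1) / 2

/-- A subspace of `V ⊕ V*` is isotropic if the pairing vanishes on it. -/
def IsIsotropic (L : Submodule ℝ (V × Module.Dual ℝ V)) : Prop :=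
  ∀ p ∈ L, ∀ q ∈ L, diracPairing p q = 0

/-- A Dirac structure: a maximally isotropic subspace. -/
def IsDirac (L : Submodule ℝ (V × Module.Dual ℝ V)) : Prop :=
  IsIsotropic L ∧ ∀ L' : Submodule ℝ (V × Module.Dual ℝ V), IsIsotropic L' → L ≤ L' → L' = L

/-- The graph of a bivector `π : V* → V`. -/
def graphBiv (π : Module.Dual ℝ V →ₗ[ℝ] V) : Submodule ℝ (V × Module.Dual ℝ V) where
  carrier := {p | p.1 = π p.2}
  add_mem' := by
    intro a b ha hb
    simp only [Set.mem_setOf_eq, Prod.fst_add, Prod.snd_add, map_add] at *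
    rw [ha, hb]
  zero_mem' := by simp
  smul_mem' := by
    intro c a ha
    simp only [Set.mem_setOf_eq, Prod.smul_fst, Prod.smul_snd, map_smul] at *
    rw [ha]

/-- Forward image of a Dirac structure along a linear map. -/
def Fwd (φ : V →ₗ[ℝ] W) (L : Submodule ℝ (V × Module.Dual ℝ V)) :
    Submodule ℝ (W × Module.Dual ℝ W) where
  carrier := {q | ∃ x : V, q.1 = φ x ∧ (x, φ.dualMap q.2) ∈ L}
  add_mem' := by
    rintro a b ⟨x, hx, hxL⟩ ⟨y, hy, hyL⟩
    refine ⟨x + y, ?_, ?_⟩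
    · simp [Prod.fst_add, hx, hy]
    · simpa [Prod.snd_add, Prod.mk_add_mk] using L.add_mem hxL hyL
  zero_mem' := ⟨0, by simp, by simpa [Prod.mk_zero_zero] using L.zero_mem⟩
  smul_mem' := by
    rintro c a ⟨x, hx, hxL⟩
    refine ⟨c • x, ?_, ?_⟩
    · simp [Prod.smul_fst, hx]
    · simpa [Prod.smul_snd, Prod.smul_mk] using L.smul_mem c hxL

/-- Backward image of a Dirac structure along a linear map. -/
def Bwd (φ : V →ₗ[ℝ] W) (L : Submodule ℝ (W × Module.Dual ℝ W)) :
    Submodule ℝ (V × Module.Dual ℝ V) where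
  carrier := {p | ∃ η : Module.Dual ℝ W, p.2 = φ.dualMap η ∧ (φ p.1, η) ∈ L}
  add_mem' := by
    rintro a b ⟨x, hx, hxL⟩ ⟨y, hy, hyL⟩
    refine ⟨x + y, ?_, ?_⟩
    · simp [Prod.snd_add, hx, hy]
    · simpa [Prod.fst_add, Prod.mk_add_mk] using L.add_mem hxL hyL
  zero_mem' := ⟨0, by simp, by simpa [Prod.mk_zero_zero] using L.zero_mem⟩
  smul_mem' := by
    rintro c a ⟨x, hx, hxL⟩
    refine ⟨c • x, ?_, ?_⟩
    · simp [Prod.smul_snd, hx]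
    · simpa [Prod.smul_fst, Prod.smul_mk] using L.smul_mem c hxL

/-- Gauge transformation of a Dirac structure by a 2-form `B : V → V*`. -/
def tau (B : V →ₗ[ℝ] Module.Dual ℝ V) (L : Submodule ℝ (V × Module.Dual ℝ V)) :
    Submodule ℝ (V × Module.Dual ℝ V) where
  carrier := {p | (p.1, p.2 - B p.1) ∈ L}
  add_mem' := by
    intro a b ha hb
    have := L.add_mem ha hb
    simpa [Prod.mk_add_mk, Prod.fst_add, Prod.snd_add, map_add, add_sub_add_comm] using this
  zero_mem' := by simpa [Prod.mk_zero_zero] using L.zero_mem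
  smul_mem' := by
    intro c a ha
    have := L.smul_mem c ha
    simpa [Prod.smul_mk, Prod.smul_fst, Prod.smul_snd, smul_sub] using this

/-- Orthogonal of a subspace with respect to a bilinear form `Ω : V → V*`. -/
def orth (Ω : V →ₗ[ℝ] Module.Dual ℝ V) (S : Submodule ℝ V) : Submodule ℝ V where
  carrier := {x | ∀ y ∈ S, Ω x y = 0}
  add_mem' := by
    intro a b ha hb y hy
    simp [map_add, ha y hy, hb y hy]
  zero_mem' := by simp
  smul_mem' := by
    intro c a ha y hy
    simp [ha y hy]

/-- Pullback of a 2-form along a linear map. -/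
def pb (φ : V →ₗ[ℝ] W) (B : W →ₗ[ℝ] Module.Dual ℝ W) : V →ₗ[ℝ] Module.Dual ℝ V :=
  φ.dualMap ∘ₗ B ∘ₗ φ

/-- The Dirac structure associated to a pair `(R, Ω)` of a subspace and a skew form on it. -/
def diracOfForm (R : Submodule ℝ V) (Ω : R →ₗ[ℝ] Module.Dual ℝ R) :
    Submodule ℝ (V × Module.Dual ℝ V) where
  carrier := {p | ∃ hx : p.1 ∈ R, ∀ y : R, p.2 y = Ω ⟨p.1, hx⟩ y}
  add_mem' := by
    rintro a b ⟨ha, Ha⟩ ⟨hb, Hb⟩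
    refine ⟨R.add_mem ha hb, fun y => ?_⟩
    have h : (⟨(a + b).1, R.add_mem ha hb⟩ : R) = ⟨a.1, ha⟩ + ⟨b.1, hb⟩ := rfl
    rw [h, map_add]
    simp [Prod.snd_add, Ha y, Hb y]
  zero_mem' := by
    refine ⟨R.zero_mem, fun y => ?_⟩
    have h : (⟨((0 : V × Module.Dual ℝ V)).1, R.zero_mem⟩ : R) = 0 := rfl
    rw [h, map_zero]
    rfl
  smul_mem' := by
    rintro c a ⟨ha, Ha⟩
    refine ⟨R.smul_mem c ha, fun y => ?_⟩
    have h : (⟨(c • a).1, R.smul_mem c ha⟩ : R) = c • ⟨a.1, ha⟩ := rfl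
    rw [h, map_smul]
    simp [Prod.smul_snd, Ha y]

theorem mem_Fwd {φ : V →ₗ[ℝ] W} {L : Submodule ℝ (V × Module.Dual ℝ V)}
    {q : W × Module.Dual ℝ W} :
    q ∈ Fwd φ L ↔ ∃ x : V, q.1 = φ x ∧ (x, φ.dualMap q.2) ∈ L := Iff.rfl

theorem mem_tau {B : V →ₗ[ℝ] Module.Dual ℝ V} {L : Submodule ℝ (V × Module.Dual ℝ V)}
    {p : V × Module.Dual ℝ V} : p ∈ tau B L ↔ (p.1, p.2 - B p.1) ∈ L := Iff.rfl

theorem mem_graphBiv {π : Module.Dual ℝ V →ₗ[ℝ] V} {p : V × Module.Dual ℝ V} :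
    p ∈ graphBiv π ↔ p.1 = π p.2 := Iff.rfl

theorem mem_orth {Ω : V →ₗ[ℝ] Module.Dual ℝ V} {S : Submodule ℝ V} {x : V} :
    x ∈ orth Ω S ↔ ∀ y ∈ S, Ω x y = 0 := Iff.rfl

/-- Gauge transformations on both legs of a linear dual pair. -/
theorem stmt_17 (Ω : V →ₗ[ℝ] Module.Dual ℝ V) (hΩ : ∀ x y : V, Ω x y = - Ω y x)
    (hnd : LinearMap.ker Ω = ⊥)
    (π₁ : Module.Dual ℝ W →ₗ[ℝ] W) (hπ₁ : ∀ η ν : Module.Dual ℝ W, η (π₁ ν) = - ν (π₁ η))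
    (π₂ : Module.Dual ℝ U →ₗ[ℝ] U) (hπ₂ : ∀ η ν : Module.Dual ℝ U, η (π₂ ν) = - ν (π₂ η))
    (J₁ : V →ₗ[ℝ] W) (J₂ : V →ₗ[ℝ] U)
    (hJ₁ : Fwd J₁ (LinearMap.graph Ω) = graphBiv π₁)
    (hJ₂ : Fwd J₂ (LinearMap.graph Ω) = graphBiv π₂)
    (hdual : orth Ω (LinearMap.ker J₁) = LinearMap.ker J₂)
    (B₁ : W →ₗ[ℝ] Module.Dual ℝ W) (hB₁ : ∀ x y : W, B₁ x y = - B₁ y x)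
    (B₂ : U →ₗ[ℝ] Module.Dual ℝ U) (hB₂ : ∀ x y : U, B₂ x y = - B₂ y x) :
    -- (i) J₁ and J₂ are forward Dirac maps for the gauge-transformed structures
    (Fwd J₁ (LinearMap.graph (Ω + pb J₁ B₁ + pb J₂ B₂)) = tau B₁ (graphBiv π₁) ∧
      Fwd J₂ (LinearMap.graph (Ω + pb J₁ B₁ + pb J₂ B₂)) = tau B₂ (graphBiv π₂)) ∧
    -- (ii) Ω̂ is nondegenerate iff both gauge transforms are graphs of bivectors
    (LinearMap.ker (Ω + pb J₁ B₁ + pb J₂ B₂) = ⊥ ↔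
      ((∀ w : W, (w, (0 : Module.Dual ℝ W)) ∈ tau B₁ (graphBiv π₁) → w = 0) ∧
       (∀ u : U, (u, (0 : Module.Dual ℝ U)) ∈ tau B₂ (graphBiv π₂) → u = 0))) ∧
    -- (iii) (ker J₁)^Ω̂ = ker J₂ + ker Ω̂
    orth (Ω + pb J₁ B₁ + pb J₂ B₂) (LinearMap.ker J₁) =
      LinearMap.ker J₂ ⊔ LinearMap.ker (Ω + pb J₁ B₁ + pb J₂ B₂) := by
  classical
  set Ωh : V →ₗ[ℝ] Module.Dual ℝ V := Ω + pb J₁ B₁ + pb J₂ B₂ with hΩhdef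
  have happ : ∀ x : V,
      Ωh x = Ω x + J₁.dualMap (B₁ (J₁ x)) + J₂.dualMap (B₂ (J₂ x)) := fun _ => rfl
  have hinj : Function.Injective Ω := LinearMap.ker_eq_bot.mp hnd
  have hsurj : Function.Surjective Ω :=
    (LinearMap.injective_iff_surjective_of_finrank_eq_finrank
      (Subspace.dual_finrank_eq).symm).mp hinj
  -- Lemma A': any pullback along J₁ is Ω of an element of ker J₂
  have lemA' : ∀ μ : Module.Dual ℝ W, ∃ z, J₂ z = 0 ∧ Ω z = J₁.dualMap μ := by
    intro μ
    obtain ⟨z, hz⟩ := hsurj (J₁.dualMap μ)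
    refine ⟨z, ?_, hz⟩
    have hzm : z ∈ orth Ω (LinearMap.ker J₁) := by
      refine mem_orth.mpr fun y hy => ?_
      rw [hz]
      simp [LinearMap.mem_ker.mp hy]
    rw [hdual] at hzm
    exact LinearMap.mem_ker.mp hzm
  -- Lemma A: any pullback along J₂ is Ω of an element of ker J₁
  have lemA : ∀ κ : Module.Dual ℝ U, ∃ z, J₁ z = 0 ∧ Ω z = J₂.dualMap κ := by
    intro κ
    obtain ⟨z, hz⟩ := hsurj (J₂.dualMap κ)
    refine ⟨z, ?_, hz⟩
    rw [← Module.forall_dual_apply_eq_zero_iff ℝ (J₁ z)]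
    intro η
    obtain ⟨x₁, hx₁k, hx₁⟩ := lemA' η
    have h1 : η (J₁ z) = (J₁.dualMap η) z := rfl
    rw [h1, ← hx₁, hΩ x₁ z, hz]
    simp [hx₁k]
  -- pushforward facts from hJ₁, hJ₂
  have hpush₁ : ∀ (z : V) (μ : Module.Dual ℝ W), Ω z = J₁.dualMap μ → J₁ z = π₁ μ := by
    intro z μ h
    have hm : ((J₁ z, μ) : W × Module.Dual ℝ W) ∈ graphBiv π₁ := by
      rw [← hJ₁]
      exact mem_Fwd.mpr ⟨z, rfl, (LinearMap.mem_graph_iff _ _).mpr h.symm⟩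
    exact mem_graphBiv.mp hm
  have hpush₂ : ∀ (z : V) (κ : Module.Dual ℝ U), Ω z = J₂.dualMap κ → J₂ z = π₂ κ := by
    intro z κ h
    have hm : ((J₂ z, κ) : U × Module.Dual ℝ U) ∈ graphBiv π₂ := by
      rw [← hJ₂]
      exact mem_Fwd.mpr ⟨z, rfl, (LinearMap.mem_graph_iff _ _).mpr h.symm⟩
    exact mem_graphBiv.mp hm
  -- key computations
  have hfwd₁ : ∀ (x : V) (η : Module.Dual ℝ W),
      J₁.dualMap η = Ωh x → J₁ x = π₁ (η - B₁ (J₁ x)) := by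
    intro x η hx
    obtain ⟨z', hz'k, hz'⟩ := lemA (B₂ (J₂ x))
    have h1 : Ω x + J₁.dualMap (B₁ (J₁ x)) + J₂.dualMap (B₂ (J₂ x)) = J₁.dualMap η := by
      rw [← happ x]; exact hx.symm
    have hkey : Ω (x + z') = J₁.dualMap (η - B₁ (J₁ x)) := by
      rw [map_add, hz', map_sub, eq_sub_iff_add_eq, ← h1]
      abel
    have h2 := hpush₁ _ _ hkey
    rwa [map_add, hz'k, add_zero] at h2
  have hfwd₂ : ∀ (x : V) (κ : Module.Dual ℝ U),
      J₂.dualMap κ = Ωh x → J₂ x = π₂ (κ - B₂ (J₂ x)) := by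
    intro x κ hx
    obtain ⟨z', hz'k, hz'⟩ := lemA' (B₁ (J₁ x))
    have h1 : Ω x + J₁.dualMap (B₁ (J₁ x)) + J₂.dualMap (B₂ (J₂ x)) = J₂.dualMap κ := by
      rw [← happ x]; exact hx.symm
    have hkey : Ω (x + z') = J₂.dualMap (κ - B₂ (J₂ x)) := by
      rw [map_add, hz', map_sub, eq_sub_iff_add_eq, ← h1]
    have h2 := hpush₂ _ _ hkey
    rwa [map_add, hz'k, add_zero] at h2
  -- Part (i)
  have Hi₁ : Fwd J₁ (LinearMap.graph Ωh) = tau B₁ (graphBiv π₁) := by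
    ext p
    obtain ⟨w, η⟩ := p
    constructor
    · rintro ⟨x, hw, hx⟩
      rw [LinearMap.mem_graph_iff] at hx
      have h2 := hfwd₁ x η hx
      show w = π₁ (η - B₁ w)
      have hw' : w = J₁ x := hw
      rw [hw']
      exact h2
    · intro h
      have h' : w = π₁ (η - B₁ w) := h
      obtain ⟨z, hzk, hz⟩ := lemA' (η - B₁ w)
      have hJz : J₁ z = π₁ (η - B₁ w) := hpush₁ _ _ hz
      have hw : w = J₁ z := by rw [hJz, ← h']
      refine ⟨z, hw, (LinearMap.mem_graph_iff _ _).mpr ?_⟩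
      show J₁.dualMap η = Ωh z
      rw [happ z, hz, hzk, map_zero, map_zero, add_zero, ← hw, ← map_add]
      simp
  have Hi₂ : Fwd J₂ (LinearMap.graph Ωh) = tau B₂ (graphBiv π₂) := by
    ext p
    obtain ⟨u, κ⟩ := p
    constructor
    · rintro ⟨x, hu, hx⟩
      rw [LinearMap.mem_graph_iff] at hx
      have h2 := hfwd₂ x κ hx
      show u = π₂ (κ - B₂ u)
      have hu' : u = J₂ x := hu
      rw [hu']
      exact h2
    · intro h
      have h' : u = π₂ (κ - B₂ u) := h
      obtain ⟨z, hzk, hz⟩ := lemA (κ - B₂ u)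
      have hJz : J₂ z = π₂ (κ - B₂ u) := hpush₂ _ _ hz
      have hu : u = J₂ z := by rw [hJz, ← h']
      refine ⟨z, hu, (LinearMap.mem_graph_iff _ _).mpr ?_⟩
      show J₂.dualMap κ = Ωh z
      rw [happ z, hz, hzk, map_zero, map_zero, add_zero, ← hu, ← map_add]
      simp
  refine ⟨⟨Hi₁, Hi₂⟩, ⟨?_, ?_⟩, ?_⟩
  -- Part (ii), forward direction
  · intro hker
    constructor
    · intro w hw
      rw [← Hi₁] at hw
      obtain ⟨x, hx1, hx2⟩ := mem_Fwd.mp hw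
      rw [LinearMap.mem_graph_iff] at hx2
      have hx0 : x = 0 := by
        have hxk : x ∈ LinearMap.ker Ωh := LinearMap.mem_ker.mpr (by rw [← hx2]; simp)
        rw [hker] at hxk
        exact (Submodule.mem_bot ℝ).mp hxk
      simpa [hx0] using hx1
    · intro u hu
      rw [← Hi₂] at hu
      obtain ⟨x, hx1, hx2⟩ := mem_Fwd.mp hu
      rw [LinearMap.mem_graph_iff] at hx2
      have hx0 : x = 0 := by
        have hxk : x ∈ LinearMap.ker Ωh := LinearMap.mem_ker.mpr (by rw [← hx2]; simp)
        rw [hker] at hxk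
        exact (Submodule.mem_bot ℝ).mp hxk
      simpa [hx0] using hx1
  -- Part (ii), backward direction
  · rintro ⟨h1, h2⟩
    refine LinearMap.ker_eq_bot'.mpr fun v hv => ?_
    obtain ⟨b, hbk, hb⟩ := lemA' (-(B₁ (J₁ v)))
    obtain ⟨c, hck, hc⟩ := lemA (-(B₂ (J₂ v)))
    have h0 : Ω v + J₁.dualMap (B₁ (J₁ v)) + J₂.dualMap (B₂ (J₂ v)) = 0 := by
      rw [← happ v]; exact hv
    have hvbc : v = b + c := by
      apply hinj
      rw [map_add, hb, hc, map_neg, map_neg,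
        eq_sub_of_add_eq (eq_neg_of_add_eq_zero_left h0)]
      abel
    have hJvb : J₁ v = J₁ b := by rw [hvbc, map_add, hck, add_zero]
    have hJvc : J₂ v = J₂ c := by rw [hvbc, map_add, hbk, zero_add]
    have hΩhb : Ωh b = 0 := by
      rw [happ b, hb, hbk, map_zero, map_zero, add_zero, ← hJvb, ← map_add]
      simp
    have hΩhc : Ωh c = 0 := by
      rw [happ c, hc, hck, map_zero, map_zero, ← hJvc, add_zero, ← map_add]
      simp
    have hJ₁b : J₁ b = 0 := by
      apply h1
      rw [← Hi₁]
      exact mem_Fwd.mpr ⟨b, rfl, (LinearMap.mem_graph_iff _ _).mpr (by simp [hΩhb])⟩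
    have hJ₂c : J₂ c = 0 := by
      apply h2
      rw [← Hi₂]
      exact mem_Fwd.mpr ⟨c, rfl, (LinearMap.mem_graph_iff _ _).mpr (by simp [hΩhc])⟩
    have hb0 : b = 0 := by
      have h' : Ω b + J₁.dualMap (B₁ (J₁ b)) + J₂.dualMap (B₂ (J₂ b)) = 0 := by
        rw [← happ b]; exact hΩhb
      rw [hJ₁b, hbk, map_zero, map_zero, map_zero, map_zero, add_zero, add_zero] at h'
      exact hinj (by rw [h', map_zero])
    have hc0 : c = 0 := by
      have h' : Ω c + J₁.dualMap (B₁ (J₁ c)) + J₂.dualMap (B₂ (J₂ c)) = 0 := by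
        rw [← happ c]; exact hΩhc
      rw [hck, hJ₂c, map_zero, map_zero, map_zero, map_zero, add_zero, add_zero] at h'
      exact hinj (by rw [h', map_zero])
    rw [hvbc, hb0, hc0, add_zero]
  -- Part (iii)
  · apply le_antisymm
    · intro x hx
      have hx' := mem_orth.mp hx
      have hann : Ωh x ∈ (LinearMap.ker J₁).dualAnnihilator :=
        (Submodule.mem_dualAnnihilator _).mpr hx'
      rw [← LinearMap.range_dualMap_eq_dualAnnihilator_ker] at hann
      obtain ⟨η, hη⟩ := hann
      have hπ : J₁ x = π₁ (η - B₁ (J₁ x)) := hfwd₁ x η hη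
      obtain ⟨z, hzk, hz⟩ := lemA' (η - B₁ (J₁ x))
      have hJz : J₁ z = J₁ x := by rw [hpush₁ _ _ hz, ← hπ]
      have hΩz : Ωh z = Ωh x := by
        rw [happ z, hz, hzk, map_zero, map_zero, add_zero, hJz, ← map_add]
        simpa using hη
      have hdecomp : x = z + (x - z) := by abel
      rw [hdecomp]
      exact Submodule.add_mem_sup (LinearMap.mem_ker.mpr hzk)
        (LinearMap.mem_ker.mpr (by rw [map_sub, hΩz, sub_self]))
    · apply sup_le
      · intro x hx
        refine mem_orth.mpr fun y hy => ?_
        have hxk : J₂ x = 0 := LinearMap.mem_ker.mp hx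
        have hyk : J₁ y = 0 := LinearMap.mem_ker.mp hy
        have hΩxy : Ω x y = 0 := by
          have hxo : x ∈ orth Ω (LinearMap.ker J₁) := hdual ▸ hx
          exact mem_orth.mp hxo y hy
        rw [happ x]
        simp [hxk, hyk, hΩxy]
      · intro x hx
        refine mem_orth.mpr fun y hy => ?_
        rw [LinearMap.mem_ker.mp hx]
        simp
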